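/- arXiv:2106.00369 — 5 statements merged into one kernel-verified Lean document; each statement's English description precedes it below -/
import Mathlib

section
/- Let a ∈ ℂ, let I > 0 be real, and set T = |a|² + I. Then for all u ∈ ℂ and all real ρ > 0, (log ρ − ρ·(|u|²·T − 2·Re(u·a) + 1) + 1)/log 2 ≤ log₂(1 + |a|²/I). -/
/-- Inequality half of the rate–WMMSE relationship: with `T = |a|² + I`,
`e(u) = |u|² T - 2 Re(u a) + 1` and MSE weight `ρ > 0`, the weighted-MSE
surrogate never exceeds the rate `log₂(1 + |a|²/I)`. -/
theorem rate_wmmse_upper_bound (a : ℂ) (I : ℝ) (hI : 0 < I) (T : ℝ)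
    (hT : T = ‖a‖ ^ 2 + I) :
    ∀ u : ℂ, ∀ ρ : ℝ, 0 < ρ →
      (Real.log ρ - ρ * (‖u‖ ^ 2 * T - 2 * (u * a).re + 1) + 1) / Real.log 2 ≤
        Real.logb 2 (1 + ‖a‖ ^ 2 / I) := by
  intro u ρ hρ
  set e : ℝ := ‖u‖ ^ 2 * T - 2 * (u * a).re + 1 with he
  have hT0 : 0 < T := by rw [hT]; positivity
  have hnu : ‖u‖ ^ 2 = u.re ^ 2 + u.im ^ 2 := by
    rw [Complex.sq_norm, Complex.normSq_apply]; ring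
  have hna : ‖a‖ ^ 2 = a.re ^ 2 + a.im ^ 2 := by
    rw [Complex.sq_norm, Complex.normSq_apply]; ring
  have hre : (u * a).re = u.re * a.re - u.im * a.im := Complex.mul_re u a
  have key : I / T ≤ e := by
    rw [div_le_iff₀ hT0]
    have h1 : 0 ≤ (T * u.re - a.re) ^ 2 := sq_nonneg _
    have h2 : 0 ≤ (T * u.im + a.im) ^ 2 := sq_nonneg _
    nlinarith [sq_nonneg (u.re ^ 2 + u.im ^ 2), hT0, hI, hna, hnu, hre,
      mul_pos hT0 hT0]
  have he0 : 0 < e := lt_of_lt_of_le (div_pos hI hT0) key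
  have hlog : Real.log ρ - ρ * e + 1 ≤ -Real.log e := by
    have h := Real.add_one_le_exp (Real.log ρ + Real.log e)
    have h2 := Real.log_le_sub_one_of_pos (mul_pos hρ he0)
    rw [Real.log_mul (ne_of_gt hρ) (ne_of_gt he0)] at h2
    linarith
  have hTI : 1 + ‖a‖ ^ 2 / I = T / I := by
    field_simp [hT]; linarith [hT]
  have h2 : -Real.log e ≤ Real.log (1 + ‖a‖ ^ 2 / I) := by
    rw [← Real.log_inv, hTI]
    apply Real.log_le_log (by positivity)
    rw [inv_eq_one_div, div_le_div_iff₀ he0 hI]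
    rw [div_le_iff₀ hT0] at key
    nlinarith
  rw [Real.logb]
  have hl2 : 0 < Real.log 2 := Real.log_pos (by norm_num)
  gcongr
  exact hlog.trans h2
end

section
/- Let a ∈ ℂ, let I > 0 be real, and set T = |a|² + I. With u* = conj(a)/T and ρ* = T/I, one has (log ρ* − ρ*·(|u*|²·T − 2·Re(u*·a) + 1) + 1)/log 2 = log₂(1 + |a|²/I). Consequently the supremum over u ∈ ℂ and ρ > 0 of (log ρ − ρ·(|u|²T − 2Re(u a) + 1) + 1)/log 2 is attained and equals log₂(1 + |a|²/I). -/
/-- Attainment half of the rate–WMMSE relationship: with `T = |a|² + I`, the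
MMSE receiver `u* = conj a / T` and optimal weight `ρ* = T/I` achieve the rate
`log₂(1 + |a|²/I)`, hence the supremum over `u ∈ ℂ`, `ρ > 0` of the
weighted-MSE surrogate is attained and equals `log₂(1 + |a|²/I)`. -/
theorem rate_wmmse_attained (a : ℂ) (I : ℝ) (hI : 0 < I) (T : ℝ)
    (hT : T = ‖a‖ ^ 2 + I) :
    (Real.log (T / I) -
        (T / I) * (‖(starRingEnd ℂ) a / (T : ℂ)‖ ^ 2 * T -
          2 * ((starRingEnd ℂ) a / (T : ℂ) * a).re + 1) + 1) / Real.log 2 =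
      Real.logb 2 (1 + ‖a‖ ^ 2 / I) ∧
    IsGreatest
      {y : ℝ | ∃ u : ℂ, ∃ ρ : ℝ, 0 < ρ ∧
        y = (Real.log ρ - ρ * (‖u‖ ^ 2 * T - 2 * (u * a).re + 1) + 1) / Real.log 2}
      (Real.logb 2 (1 + ‖a‖ ^ 2 / I)) := by
  have hT0 : 0 < T := by rw [hT]; positivity
  have hTI : 1 + ‖a‖ ^ 2 / I = T / I := by field_simp [hT]; linarith [hT]
  -- compute the MSE at u*
  have hnorm : ‖(starRingEnd ℂ) a / (T : ℂ)‖ ^ 2 = ‖a‖ ^ 2 / T ^ 2 := by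
    rw [norm_div, RCLike.norm_conj, Complex.norm_real, Real.norm_eq_abs, abs_of_pos hT0, div_pow]
  have hre : ((starRingEnd ℂ) a / (T : ℂ) * a).re = ‖a‖ ^ 2 / T := by
    have : (starRingEnd ℂ) a / (T : ℂ) * a = ((‖a‖ ^ 2 / T : ℝ) : ℂ) := by
      rw [div_mul_eq_mul_div, Complex.conj_mul']
      push_cast
      ring
    rw [this, Complex.ofReal_re]
  have hE : ‖(starRingEnd ℂ) a / (T : ℂ)‖ ^ 2 * T -
      2 * ((starRingEnd ℂ) a / (T : ℂ) * a).re + 1 = I / T := by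
    rw [hnorm, hre]
    field_simp
    linear_combination hT
  have h1 : (Real.log (T / I) -
        (T / I) * (‖(starRingEnd ℂ) a / (T : ℂ)‖ ^ 2 * T -
          2 * ((starRingEnd ℂ) a / (T : ℂ) * a).re + 1) + 1) / Real.log 2 =
      Real.logb 2 (1 + ‖a‖ ^ 2 / I) := by
    rw [hE, hTI, Real.logb]
    have : T / I * (I / T) = 1 := by field_simp
    rw [this]; ring_nf
  refine ⟨h1, ⟨⟨(starRingEnd ℂ) a / (T : ℂ), T / I, by positivity, h1.symm⟩, ?_⟩⟩
  rintro y ⟨u, ρ, hρ, rfl⟩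
  rw [hTI, Real.logb]
  have hlog2 : 0 < Real.log 2 := Real.log_pos (by norm_num)
  rw [div_le_div_iff_of_pos_right hlog2]
  -- e(u) ≥ I/T
  have hre2 : (u * a).re ≤ ‖u‖ * ‖a‖ := by
    calc (u * a).re ≤ ‖u * a‖ := Complex.re_le_norm _
    _ = ‖u‖ * ‖a‖ := norm_mul _ _
  have he : I / T ≤ ‖u‖ ^ 2 * T - 2 * (u * a).re + 1 := by
    rw [div_le_iff₀ hT0]
    nlinarith [sq_nonneg (‖u‖ * T - ‖a‖), norm_nonneg u, norm_nonneg a]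
  have hkey : Real.log (ρ * (I / T)) ≤ ρ * (I / T) - 1 :=
    Real.log_le_sub_one_of_pos (by positivity)
  rw [Real.log_mul (ne_of_gt hρ) (by positivity),
    Real.log_div (ne_of_gt hI) (ne_of_gt hT0)] at hkey
  rw [Real.log_div (ne_of_gt hT0) (ne_of_gt hI)]
  have : ρ * (I / T) ≤ ρ * (‖u‖ ^ 2 * T - 2 * (u * a).re + 1) :=
    mul_le_mul_of_nonneg_left he (le_of_lt hρ)
  linarith
end

section
/- Let d, G be positive integers, h ∈ ℂ^d, vectors w_j^p ∈ ℂ^d for j in a finite index set 𝒢 of private precoders and w_l^c ∈ ℂ^d for l in a finite index set Ω of common precoders, σ > 0, and fix g ∈ 𝒢. Define the interference-plus-noise I = σ² + Σ_{j ∈ 𝒢, j ≠ g} |⟪h, w_j^p⟫|² + Σ_{l ∈ Ω} |⟪h, w_l^c⟫|², the private SINR γ = |⟪h, w_g^p⟫|² / I, the total power T = |⟪h, w_g^p⟫|² + I, and the MSE e(u) = |u|²·T − 2·Re(u·⟪h, w_g^p⟫) + 1 for u ∈ ℂ. Then log₂(1 + γ) = sup over u ∈ ℂ and real ρ > 0 of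 (log ρ − ρ·e(u) + 1)/log 2, and this supremum is attained. -/
open scoped ComplexInnerProductSpace BigOperators

/-- Rate–WMMSE lemma for the private stream of multicast group `g`: with
channel `h ∈ ℂ^d`, private precoders `wp j` (`j ∈ 𝒢`), non-decoded common
precoders `wc l` (`l ∈ Ω`), noise std `σ > 0`, interference-plus-noise
`I = σ² + ∑_{j ≠ g} |⟪h, wp j⟫|² + ∑_l |⟪h, wc l⟫|²`, SINR `γ = |⟪h, wp g⟫|²/I`,
total power `T`, and MSE `e(u) = |u|² T - 2 Re(u ⟪h, wp g⟫) + 1`, the rate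
`log₂(1+γ)` equals the (attained) supremum over `u ∈ ℂ`, `ρ > 0` of
`(log ρ - ρ e(u) + 1)/log 2`. -/
theorem rate_wmmse_private {d G : ℕ} (hd : 0 < d) (hG : 0 < G)
    {Ω : Type*} [Fintype Ω]
    (h : EuclideanSpace ℂ (Fin d))
    (wp : Fin G → EuclideanSpace ℂ (Fin d))
    (wc : Ω → EuclideanSpace ℂ (Fin d))
    (σ : ℝ) (hσ : 0 < σ) (g : Fin G)
    (I : ℝ)
    (hI : I = σ ^ 2 + (∑ j ∈ Finset.univ.erase g, ‖⟪h, wp j⟫‖ ^ 2) +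
      ∑ l : Ω, ‖⟪h, wc l⟫‖ ^ 2)
    (γ : ℝ) (hγ : γ = ‖⟪h, wp g⟫‖ ^ 2 / I)
    (T : ℝ) (hT : T = ‖⟪h, wp g⟫‖ ^ 2 + I)
    (e : ℂ → ℝ)
    (he : ∀ u : ℂ, e u = ‖u‖ ^ 2 * T - 2 * (u * ⟪h, wp g⟫).re + 1) :
    IsGreatest
      {y : ℝ | ∃ u : ℂ, ∃ ρ : ℝ, 0 < ρ ∧
        y = (Real.log ρ - ρ * e u + 1) / Real.log 2}
      (Real.logb 2 (1 + γ)) := by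
  set c : ℂ := ⟪h, wp g⟫ with hc
  have hIpos : 0 < I := by
    rw [hI]
    have h1 : (0:ℝ) ≤ ∑ j ∈ Finset.univ.erase g, ‖⟪h, wp j⟫‖ ^ 2 :=
      Finset.sum_nonneg fun _ _ => sq_nonneg _
    have h2 : (0:ℝ) ≤ ∑ l : Ω, ‖⟪h, wc l⟫‖ ^ 2 :=
      Finset.sum_nonneg fun _ _ => sq_nonneg _
    nlinarith [sq_nonneg σ, hσ]
  have hTpos : 0 < T := by rw [hT]; nlinarith [sq_nonneg ‖c‖]
  have hγT : 1 + γ = T / I := by rw [hγ, hT]; field_simp; ring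
  have hlogb : Real.logb 2 (1 + γ) = Real.log (T / I) / Real.log 2 := by
    rw [hγT, Real.logb]
  -- minimal MSE
  have hemin : ∀ u : ℂ, I / T ≤ e u := by
    intro u
    have hre : (u * c).re ≤ ‖u‖ * ‖c‖ := by
      calc (u * c).re ≤ ‖u * c‖ := Complex.re_le_norm _
        _ = ‖u‖ * ‖c‖ := norm_mul _ _
    rw [he u]
    rw [div_le_iff₀ hTpos]
    nlinarith [sq_nonneg (T * ‖u‖ - ‖c‖), hTpos, hT, sq_nonneg ‖u‖]
  constructor
  · -- membership: attained at u₀ = conj c / T, ρ₀ = T/I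
    refine ⟨(starRingEnd ℂ) c / (T:ℂ), T / I, div_pos hTpos hIpos, ?_⟩
    have hu : e ((starRingEnd ℂ) c / (T:ℂ)) = I / T := by
      rw [he]
      have h1 : ‖(starRingEnd ℂ) c / (T:ℂ)‖ = ‖c‖ / T := by
        rw [norm_div, RingHomIsometric.norm_map, Complex.norm_real,
          Real.norm_of_nonneg hTpos.le]
      have h2 : ((starRingEnd ℂ) c / (T:ℂ) * c).re = ‖c‖^2 / T := by
        have : (starRingEnd ℂ) c / (T:ℂ) * c = ((‖c‖^2 / T : ℝ) : ℂ) := by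
          rw [div_mul_eq_mul_div, mul_comm ((starRingEnd ℂ) c) c, Complex.mul_conj]
          push_cast [Complex.normSq_eq_norm_sq]
          ring
        rw [this, Complex.ofReal_re]
      rw [h1, h2, hT]
      field_simp
      ring
    rw [hu, hlogb]
    field_simp
    ring
  · rintro y ⟨u, ρ, hρ, rfl⟩
    rw [hlogb]
    have hlog2 : (0:ℝ) < Real.log 2 := Real.log_pos (by norm_num)
    have hmse := hemin u
    have h1 : ρ * (I / T) ≤ ρ * e u := mul_le_mul_of_nonneg_left hmse hρ.le
    have key : Real.log (ρ * (I / T)) ≤ ρ * (I / T) - 1 :=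
      Real.log_le_sub_one_of_pos (by positivity)
    have hsplit : Real.log (ρ * (I / T)) = Real.log ρ - Real.log (T / I) := by
      rw [Real.log_mul hρ.ne' (by positivity),
        Real.log_div hIpos.ne' hTpos.ne', Real.log_div hTpos.ne' hIpos.ne']
      ring
    have : Real.log ρ - ρ * e u + 1 ≤ Real.log (T / I) := by linarith
    gcongr
end

section
/- Let d be a positive integer, h ∈ ℂ^d, vectors w_j^p ∈ ℂ^d for j in a finite index set 𝒢 of private precoders, and common precoders w_l^c ∈ ℂ^d indexed by the disjoint union of a finite set Ω (common streams never decoded), a finite set Ψ (common streams not yet decoded in the successive order), and a distinguished index i (the common stream currently decoded), and let σ > 0. Define I = σ² + Σ_{j ∈ 𝒢} |⟪h, w_j^p⟫|² + Σ_{l ∈ Ω} |⟪h, w_l^c⟫|² + Σ_{m ∈ Ψ} |⟪h, w_m^c⟫|², the common SINR γ = |⟪h, w_i^c⟫|² / I, T = |⟪h, w_i^c⟫|² + I, and e(u) = |u|²·T − 2·Re(u·⟪h, w_i^c⟫) + 1 for u ∈ ℂ. Then log₂(1 + γ) = sup over u ∈ ℂ and real ρ > 0 of (log ρ − ρ·e(u)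 + 1)/log 2, and this supremum is attained. -/
open scoped ComplexInnerProductSpace BigOperators

/-- Rate–WMMSE lemma for a common stream under SIC: the common precoders are
indexed by the disjoint union of `Ω` (never decoded), `Ψ` (not yet decoded) and
a distinguished index `i` (currently decoded, with precoder `wci`); with
interference-plus-noise
`I = σ² + ∑_{j ∈ 𝒢} |⟪h, wp j⟫|² + ∑_{l ∈ Ω} |⟪h, wcΩ l⟫|² + ∑_{m ∈ Ψ} |⟪h, wcΨ m⟫|²`,
SINR `γ = |⟪h, wci⟫|²/I`, total power `T = |⟪h, wci⟫|² + I`, and MSE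
`e(u) = |u|² T - 2 Re(u ⟪h, wci⟫) + 1`, the rate `log₂(1+γ)` equals the
(attained) supremum over `u ∈ ℂ`, `ρ > 0` of `(log ρ - ρ e(u) + 1)/log 2`. -/
theorem rate_wmmse_common {d : ℕ} (hd : 0 < d)
    {𝒢 Ω Ψ : Type*} [Fintype 𝒢] [Fintype Ω] [Fintype Ψ]
    (h : EuclideanSpace ℂ (Fin d))
    (wp : 𝒢 → EuclideanSpace ℂ (Fin d))
    (wcΩ : Ω → EuclideanSpace ℂ (Fin d))
    (wcΨ : Ψ → EuclideanSpace ℂ (Fin d))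
    (wci : EuclideanSpace ℂ (Fin d))
    (σ : ℝ) (hσ : 0 < σ)
    (I : ℝ)
    (hI : I = σ ^ 2 + (∑ j : 𝒢, ‖⟪h, wp j⟫‖ ^ 2) +
      (∑ l : Ω, ‖⟪h, wcΩ l⟫‖ ^ 2) + ∑ m : Ψ, ‖⟪h, wcΨ m⟫‖ ^ 2)
    (γ : ℝ) (hγ : γ = ‖⟪h, wci⟫‖ ^ 2 / I)
    (T : ℝ) (hT : T = ‖⟪h, wci⟫‖ ^ 2 + I)
    (e : ℂ → ℝ)
    (he : ∀ u : ℂ, e u = ‖u‖ ^ 2 * T - 2 * (u * ⟪h, wci⟫).re + 1) :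
    IsGreatest
      {y : ℝ | ∃ u : ℂ, ∃ ρ : ℝ, 0 < ρ ∧
        y = (Real.log ρ - ρ * e u + 1) / Real.log 2}
      (Real.logb 2 (1 + γ)) := by

  set g : ℂ := ⟪h, wci⟫ with hg
  have hnorm : ∀ z : ℂ, ‖z‖ ^ 2 = z.re ^ 2 + z.im ^ 2 := fun z => by
    rw [Complex.sq_norm, Complex.normSq_apply]; ring
  have hIpos : 0 < I := by
    have h1 : (0:ℝ) ≤ ∑ j : 𝒢, ‖⟪h, wp j⟫‖ ^ 2 := Finset.sum_nonneg fun _ _ => sq_nonneg _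
    have h2 : (0:ℝ) ≤ ∑ l : Ω, ‖⟪h, wcΩ l⟫‖ ^ 2 := Finset.sum_nonneg fun _ _ => sq_nonneg _
    have h3 : (0:ℝ) ≤ ∑ m : Ψ, ‖⟪h, wcΨ m⟫‖ ^ 2 := Finset.sum_nonneg fun _ _ => sq_nonneg _
    rw [hI]; nlinarith
  have hTpos : 0 < T := by rw [hT]; nlinarith [sq_nonneg ‖g‖]
  have hIT : I = T - (g.re ^ 2 + g.im ^ 2) := by
    rw [hT, hnorm g]; ring
  have hemin : ∀ u : ℂ, I / T ≤ e u := by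
    intro u
    rw [he u, hnorm u, Complex.mul_re, div_le_iff₀ hTpos]
    nlinarith [sq_nonneg (T * u.re - g.re), sq_nonneg (T * u.im + g.im)]
  have hγval : 1 + γ = T / I := by
    rw [hγ, hT]; field_simp; ring
  have hTI : 0 < T / I := div_pos hTpos hIpos
  have hlog2 : 0 < Real.log 2 := Real.log_pos (by norm_num)
  constructor
  · -- membership: u = conj g / T, ρ = T / I
    refine ⟨(starRingEnd ℂ) g / (T : ℂ), T / I, hTI, ?_⟩
    have heu : e ((starRingEnd ℂ) g / (T : ℂ)) = I / T := by
      rw [he, hnorm]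
      have hre : ((starRingEnd ℂ) g / (T : ℂ)).re = g.re / T := by
        simp [Complex.div_re, Complex.normSq_apply]
        field_simp
      have him : ((starRingEnd ℂ) g / (T : ℂ)).im = -g.im / T := by
        simp [Complex.div_im, Complex.normSq_apply]
        field_simp
      rw [hre, him, Complex.mul_re, hre, him, hIT]
      field_simp
      ring
    rw [heu, hγval, Real.logb, Real.log_div (ne_of_gt hTpos) (ne_of_gt hIpos)]
    have : T / I * (I / T) = 1 := by field_simp
    rw [this]
    ring
  · -- upper bound
    rintro y ⟨u, ρ, hρ, rfl⟩
    rw [hγval, Real.logb]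
    rw [div_le_div_iff_of_pos_right hlog2]
    · -- log ρ - ρ e u + 1 ≤ log (T/I)
      have h1 : ρ * (I / T) ≤ ρ * e u := by
        exact mul_le_mul_of_nonneg_left (hemin u) (le_of_lt hρ)
      have hx : 0 < ρ * (I / T) := mul_pos hρ (div_pos hIpos hTpos)
      have h2 : Real.log (ρ * (I / T)) ≤ ρ * (I / T) - 1 := Real.log_le_sub_one_of_pos hx
      have h3 : Real.log (ρ * (I / T)) = Real.log ρ + Real.log (I / T) :=
        Real.log_mul (ne_of_gt hρ) (ne_of_gt (div_pos hIpos hTpos))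
      have h4 : Real.log (I / T) = - Real.log (T / I) := by
        rw [← Real.log_inv]
        congr 1
        field_simp
      linarith
end

section
/- Let (Ω, 𝓕, P) be a probability space and let h¹, h², … : Ω → ℂ^d be an i.i.d. sequence of random vectors with ‖hᵐ‖ ≤ C almost surely. Let W be a nonempty compact subset of (ℂ^d)^{G}, fix σ > 0 and g ∈ {1,…,G}, and define R(w, h) = log₂( 1 + |⟪h, w_g⟫|² / (σ² + Σ_{j ≠ g} |⟪h, w_j⟫|²) ) for w = (w₁,…,w_G) ∈ W. Then almost surely, sup_{w ∈ W} (1/M)·Σ_{m=1}^M R(w, hᵐ) converges to sup_{w ∈ W} E[R(w, h¹)] as M → ∞. -/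
open MeasureTheory ProbabilityTheory Filter
open scoped ComplexInnerProductSpace BigOperators
open scoped Topology

/-- Optimal-value convergence of the SAA problem (Theorem 1 of the paper): for
an i.i.d., almost surely bounded sequence of channel vectors, a nonempty
compact feasible set `W` of precoder tuples, noise std `σ > 0` and group index
`g`, the optimal value `sup_{w ∈ W}` of the sample-average rate converges
almost surely to the optimal value `sup_{w ∈ W}` of the ergodic rate. -/
theorem saa_optimal_value_convergence {Ωs : Type*} [MeasurableSpace Ωs]
    (P : Measure Ωs) [IsProbabilityMeasure P]
    {d G : ℕ} (hd : 0 < d) (hG : 0 < G)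
    [MeasurableSpace (EuclideanSpace ℂ (Fin d))]
    [BorelSpace (EuclideanSpace ℂ (Fin d))]
    (h : ℕ → Ωs → EuclideanSpace ℂ (Fin d))
    (hmeas : ∀ m, Measurable (h m))
    (hindep : iIndepFun h P)
    (hident : ∀ m, IdentDistrib (h m) (h 0) P P)
    (C : ℝ) (hC : 0 ≤ C) (hbdd : ∀ m, ∀ᵐ ω ∂P, ‖h m ω‖ ≤ C)
    (W : Set (Fin G → EuclideanSpace ℂ (Fin d)))
    (hWc : IsCompact W) (hWne : W.Nonempty)
    (σ : ℝ) (hσ : 0 < σ) (g : Fin G)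
    (R : (Fin G → EuclideanSpace ℂ (Fin d)) → EuclideanSpace ℂ (Fin d) → ℝ)
    (hR : ∀ w v, R w v = Real.logb 2
      (1 + ‖⟪v, w g⟫‖ ^ 2 /
        (σ ^ 2 + ∑ j ∈ Finset.univ.erase g, ‖⟪v, w j⟫‖ ^ 2))) :
    ∀ᵐ ω ∂P, Tendsto
      (fun M : ℕ => ⨆ w : W,
        (1 / (M : ℝ)) * ∑ m ∈ Finset.range M, R w (h m ω))
      atTop (nhds (⨆ w : W, ∫ ω', R w (h 0 ω') ∂P)) := by
  classical
  haveI : Nonempty W := hWne.to_subtype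
  -- Continuity of (w, v) ↦ R w v.
  have hFcont : Continuous (fun p : (Fin G → EuclideanSpace ℂ (Fin d)) × EuclideanSpace ℂ (Fin d) => R p.1 p.2) := by
    have hfun : (fun p : (Fin G → EuclideanSpace ℂ (Fin d)) × EuclideanSpace ℂ (Fin d) => R p.1 p.2) =
        fun p => Real.logb 2 (1 + ‖⟪p.2, p.1 g⟫‖ ^ 2 /
          (σ ^ 2 + ∑ j ∈ Finset.univ.erase g, ‖⟪p.2, p.1 j⟫‖ ^ 2)) :=
      funext fun p => hR p.1 p.2
    have hin : ∀ j : Fin G, Continuous fun p : (Fin G → EuclideanSpace ℂ (Fin d)) × EuclideanSpace ℂ (Fin d) => ⟪p.2, p.1 j⟫ :=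
      fun j => Continuous.inner continuous_snd ((continuous_apply j).comp continuous_fst)
    have hden : Continuous fun p : (Fin G → EuclideanSpace ℂ (Fin d)) × EuclideanSpace ℂ (Fin d) =>
        σ ^ 2 + ∑ j ∈ Finset.univ.erase g, ‖⟪p.2, p.1 j⟫‖ ^ 2 :=
      continuous_const.add (continuous_finset_sum _ fun j _ => ((hin j).norm.pow 2))
    have hdenpos : ∀ p : (Fin G → EuclideanSpace ℂ (Fin d)) × EuclideanSpace ℂ (Fin d),
        0 < σ ^ 2 + ∑ j ∈ Finset.univ.erase g, ‖⟪p.2, p.1 j⟫‖ ^ 2 := by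
      intro p
      have : (0:ℝ) ≤ ∑ j ∈ Finset.univ.erase g, ‖⟪p.2, p.1 j⟫‖ ^ 2 :=
        Finset.sum_nonneg fun j _ => by positivity
      nlinarith [sq_nonneg σ, hσ]
    have hargc : Continuous fun p : (Fin G → EuclideanSpace ℂ (Fin d)) × EuclideanSpace ℂ (Fin d) =>
        1 + ‖⟪p.2, p.1 g⟫‖ ^ 2 /
          (σ ^ 2 + ∑ j ∈ Finset.univ.erase g, ‖⟪p.2, p.1 j⟫‖ ^ 2) :=
      continuous_const.add (((hin g).norm.pow 2).div hden fun p => (hdenpos p).ne')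
    have hargpos : ∀ p : (Fin G → EuclideanSpace ℂ (Fin d)) × EuclideanSpace ℂ (Fin d),
        0 < 1 + ‖⟪p.2, p.1 g⟫‖ ^ 2 /
          (σ ^ 2 + ∑ j ∈ Finset.univ.erase g, ‖⟪p.2, p.1 j⟫‖ ^ 2) := by
      intro p
      have : (0:ℝ) ≤ ‖⟪p.2, p.1 g⟫‖ ^ 2 /
          (σ ^ 2 + ∑ j ∈ Finset.univ.erase g, ‖⟪p.2, p.1 j⟫‖ ^ 2) :=
        div_nonneg (by positivity) (hdenpos p).le
      linarith
    rw [hfun]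
    simp only [Real.logb]
    exact (hargc.log fun p => (hargpos p).ne').div_const _
  have hRwcont : ∀ w : Fin G → EuclideanSpace ℂ (Fin d), Continuous (R w) := fun w =>
    hFcont.comp (Continuous.prodMk_right w)
  -- compact set of channel values
  have hKc : IsCompact (Metric.closedBall (0 : EuclideanSpace ℂ (Fin d)) C) := isCompact_closedBall _ _
  have hSc : IsCompact (W ×ˢ Metric.closedBall (0 : EuclideanSpace ℂ (Fin d)) C) := hWc.prod hKc
  -- uniform bound
  obtain ⟨B0, hB0⟩ := hSc.exists_bound_of_continuousOn hFcont.continuousOn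
  set B : ℝ := max B0 0 with hBdef
  have hBnn : (0:ℝ) ≤ B := le_max_right _ _
  have hB : ∀ w ∈ W, ∀ v : EuclideanSpace ℂ (Fin d), ‖v‖ ≤ C → |R w v| ≤ B := by
    intro w hw v hv
    have hmem : (w, v) ∈ W ×ˢ Metric.closedBall (0 : EuclideanSpace ℂ (Fin d)) C :=
      ⟨hw, by simpa [Metric.mem_closedBall, dist_zero_right] using hv⟩
    calc |R w v| = ‖(fun p : (Fin G → EuclideanSpace ℂ (Fin d)) × EuclideanSpace ℂ (Fin d) => R p.1 p.2) (w, v)‖ := by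
          simp [Real.norm_eq_abs]
      _ ≤ B0 := hB0 _ hmem
      _ ≤ B := le_max_left _ _
  -- finite nets with uniform approximation of R
  have hnet : ∀ n : ℕ, ∃ T : Set (Fin G → EuclideanSpace ℂ (Fin d)), T ⊆ W ∧ T.Finite ∧
      ∀ w ∈ W, ∃ w₀ ∈ T, ∀ v : EuclideanSpace ℂ (Fin d), ‖v‖ ≤ C →
        |R w v - R w₀ v| ≤ 1 / (n + 1 : ℝ) := by
    intro n
    have hεpos : (0:ℝ) < 1 / (n + 1 : ℝ) := by positivity
    have huc := hSc.uniformContinuousOn_of_continuous hFcont.continuousOn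
    rw [Metric.uniformContinuousOn_iff] at huc
    obtain ⟨δ, hδ, hδ'⟩ := huc _ hεpos
    obtain ⟨T, hTW, hTfin, hTcov⟩ := hWc.elim_finite_subcover_image
      (fun w (_ : w ∈ W) => Metric.isOpen_ball (x := w) (ε := δ))
      (fun w hw => Set.mem_biUnion hw (Metric.mem_ball_self hδ))
    refine ⟨T, hTW, hTfin, fun w hw => ?_⟩
    obtain ⟨w₀, hw₀T, hwball⟩ := Set.mem_iUnion₂.1 (hTcov hw)
    refine ⟨w₀, hw₀T, fun v hv => ?_⟩
    have hvmem : v ∈ Metric.closedBall (0 : EuclideanSpace ℂ (Fin d)) C := by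
      simpa [Metric.mem_closedBall, dist_zero_right] using hv
    have hdist : dist ((w, v) : (Fin G → EuclideanSpace ℂ (Fin d)) × EuclideanSpace ℂ (Fin d)) (w₀, v) < δ := by
      rw [Prod.dist_eq]
      simp only [dist_self]
      exact max_lt (Metric.mem_ball.1 hwball) hδ
    have := hδ' (w, v) ⟨hw, hvmem⟩ (w₀, v) ⟨hTW hw₀T, hvmem⟩ hdist
    rw [Real.dist_eq] at this
    exact this.le
  choose T hTW hTfin hTnet using hnet
  -- integrability and SLLN on the countable union of nets
  have hint : ∀ w ∈ W, Integrable (fun ω' => R w (h 0 ω')) P := by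
    intro w hw
    refine (integrable_const B).mono'
      (((hRwcont w).measurable.comp (hmeas 0)).aestronglyMeasurable) ?_
    filter_upwards [hbdd 0] with ω' hω'
    simpa [Real.norm_eq_abs] using hB w hw _ hω'
  have hSLLN : ∀ w ∈ W, ∀ᵐ ω ∂P, Tendsto
      (fun M : ℕ => (M : ℝ)⁻¹ • ∑ m ∈ Finset.range M, R w (h m ω))
      atTop (𝓝 (∫ ω', R w (h 0 ω') ∂P)) := by
    intro w hw
    exact strong_law_ae (fun m ω => R w (h m ω)) (hint w hw)
      (fun i j hij => (hindep.indepFun hij).comp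
        (hRwcont w).measurable (hRwcont w).measurable)
      (fun m => (hident m).comp (hRwcont w).measurable)
  have hgood : ∀ᵐ ω ∂P, (∀ m, ‖h m ω‖ ≤ C) ∧
      ∀ n : ℕ, ∀ w ∈ T n, Tendsto
        (fun M : ℕ => (M : ℝ)⁻¹ • ∑ m ∈ Finset.range M, R w (h m ω))
        atTop (𝓝 (∫ ω', R w (h 0 ω') ∂P)) := by
    refine (ae_all_iff.2 hbdd).and (ae_all_iff.2 fun n => ?_)
    exact (ae_ball_iff (hTfin n).countable).2 fun w hw => hSLLN w (hTW n hw)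
  -- deterministic part
  filter_upwards [hgood] with ω hω
  obtain ⟨hωb, hωT⟩ := hω
  set μf : (Fin G → EuclideanSpace ℂ (Fin d)) → ℝ := fun w => ∫ ω', R w (h 0 ω') ∂P with hμf
  set fM : ℕ → (Fin G → EuclideanSpace ℂ (Fin d)) → ℝ :=
    fun M w => (1 / (M : ℝ)) * ∑ m ∈ Finset.range M, R w (h m ω) with hfM
  show Tendsto (fun M : ℕ => ⨆ w : W, fM M w) atTop (𝓝 (⨆ w : W, μf w))
  -- bounds
  have hfMb : ∀ M : ℕ, ∀ w ∈ W, |fM M w| ≤ B := by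
    intro M w hw
    rcases Nat.eq_zero_or_pos M with rfl | hM
    · simpa [hfM] using hBnn
    · have hsum : |∑ m ∈ Finset.range M, R w (h m ω)| ≤ (M : ℝ) * B := by
        calc |∑ m ∈ Finset.range M, R w (h m ω)|
            ≤ ∑ m ∈ Finset.range M, |R w (h m ω)| := Finset.abs_sum_le_sum_abs _ _
          _ ≤ ∑ _m ∈ Finset.range M, B :=
              Finset.sum_le_sum fun m _ => hB w hw _ (hωb m)
          _ = (M : ℝ) * B := by simp [mul_comm]
      have hMpos : (0:ℝ) < (M : ℝ) := by exact_mod_cast hM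
      rw [hfM, abs_mul, abs_of_nonneg (by positivity : (0:ℝ) ≤ 1 / (M:ℝ))]
      calc 1 / (M:ℝ) * |∑ m ∈ Finset.range M, R w (h m ω)|
          ≤ 1 / (M:ℝ) * ((M:ℝ) * B) := by
            exact mul_le_mul_of_nonneg_left hsum (by positivity)
        _ = B := by field_simp
  have hμb : ∀ w ∈ W, |μf w| ≤ B := by
    intro w hw
    have := norm_integral_le_of_norm_le_const (μ := P)
      (f := fun ω' => R w (h 0 ω')) (C := B) ?_
    · simpa [Real.norm_eq_abs, measure_univ] using this
    · filter_upwards [hbdd 0] with ω' hω'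
      simpa [Real.norm_eq_abs] using hB w hw _ hω'
  have hbddM : ∀ M : ℕ, BddAbove (Set.range fun w : W => fM M w) := by
    intro M
    refine ⟨B, ?_⟩
    rintro x ⟨w, rfl⟩
    exact (abs_le.1 (hfMb M w w.2)).2
  have hbddμ : BddAbove (Set.range fun w : W => μf w) := by
    refine ⟨B, ?_⟩
    rintro x ⟨w, rfl⟩
    exact (abs_le.1 (hμb w w.2)).2
  -- equicontinuity transfers
  have hfMnet : ∀ n : ℕ, ∀ M : ℕ, ∀ w w₀ : Fin G → EuclideanSpace ℂ (Fin d),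
      (∀ v : EuclideanSpace ℂ (Fin d), ‖v‖ ≤ C → |R w v - R w₀ v| ≤ 1 / (n + 1 : ℝ)) →
      |fM M w - fM M w₀| ≤ 1 / (n + 1 : ℝ) := by
    intro n M w w₀ hP
    rcases Nat.eq_zero_or_pos M with rfl | hM
    · simp [hfM]
      positivity
    · have hMpos : (0:ℝ) < (M : ℝ) := by exact_mod_cast hM
      have : fM M w - fM M w₀ =
          (1 / (M:ℝ)) * ∑ m ∈ Finset.range M, (R w (h m ω) - R w₀ (h m ω)) := by
        rw [hfM]
        simp [Finset.sum_sub_distrib, mul_sub]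
      rw [this, abs_mul, abs_of_nonneg (by positivity : (0:ℝ) ≤ 1 / (M:ℝ))]
      have hsum : |∑ m ∈ Finset.range M, (R w (h m ω) - R w₀ (h m ω))|
          ≤ (M : ℝ) * (1 / (n + 1 : ℝ)) := by
        calc |∑ m ∈ Finset.range M, (R w (h m ω) - R w₀ (h m ω))|
            ≤ ∑ m ∈ Finset.range M, |R w (h m ω) - R w₀ (h m ω)| :=
              Finset.abs_sum_le_sum_abs _ _
          _ ≤ ∑ _m ∈ Finset.range M, 1 / (n + 1 : ℝ) :=
              Finset.sum_le_sum fun m _ => hP _ (hωb m)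
          _ = (M : ℝ) * (1 / (n + 1 : ℝ)) := by simp [mul_comm]
      calc 1 / (M:ℝ) * |∑ m ∈ Finset.range M, (R w (h m ω) - R w₀ (h m ω))|
          ≤ 1 / (M:ℝ) * ((M:ℝ) * (1 / (n + 1 : ℝ))) :=
            mul_le_mul_of_nonneg_left hsum (by positivity)
        _ = 1 / (n + 1 : ℝ) := by field_simp
  have hμnet : ∀ n : ℕ, ∀ w ∈ W, ∀ w₀ ∈ W,
      (∀ v : EuclideanSpace ℂ (Fin d), ‖v‖ ≤ C → |R w v - R w₀ v| ≤ 1 / (n + 1 : ℝ)) →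
      |μf w - μf w₀| ≤ 1 / (n + 1 : ℝ) := by
    intro n w hw w₀ hw₀ hP
    have hsub : μf w - μf w₀ =
        ∫ ω', (R w (h 0 ω') - R w₀ (h 0 ω')) ∂P := by
      rw [hμf]
      exact (integral_sub (hint w hw) (hint w₀ hw₀)).symm
    rw [hsub]
    have := norm_integral_le_of_norm_le_const (μ := P)
      (f := fun ω' => R w (h 0 ω') - R w₀ (h 0 ω')) (C := 1 / (n + 1 : ℝ)) ?_
    · simpa [Real.norm_eq_abs, measure_univ] using this
    · filter_upwards [hbdd 0] with ω' hω'
      simpa [Real.norm_eq_abs] using hP _ hω'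
  -- main convergence
  rw [Metric.tendsto_atTop]
  intro ε hε
  obtain ⟨n, hn⟩ := exists_nat_one_div_lt (show (0:ℝ) < ε / 2 by linarith)
  have hεn : 2 * (1 / (n + 1 : ℝ)) < ε := by
    have : (1 : ℝ) / (n + 1 : ℝ) < ε / 2 := by exact_mod_cast hn
    linarith
  -- eventually all centers of the net are close
  have hev : ∀ᶠ M : ℕ in atTop, ∀ w₀ ∈ T n,
      |fM M w₀ - μf w₀| < 1 / (n + 1 : ℝ) / 2 := by
    rw [eventually_all_finite (hTfin n)]
    intro w₀ hw₀
    have ht := hωT n w₀ hw₀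
    have heq : (fun M : ℕ => fM M w₀) =
        fun M : ℕ => (M : ℝ)⁻¹ • ∑ m ∈ Finset.range M, R w₀ (h m ω) := by
      funext M
      simp [hfM, smul_eq_mul, one_div]
    have ht' : Tendsto (fun M : ℕ => fM M w₀) atTop (𝓝 (μf w₀)) := by
      rw [heq]; exact ht
    have := Metric.tendsto_atTop.1 ht' (1 / (n + 1 : ℝ) / 2) (by positivity)
    obtain ⟨N, hN⟩ := this
    exact eventually_atTop.2 ⟨N, fun M hM => by
      have := hN M hM; rwa [Real.dist_eq] at this⟩
  obtain ⟨N, hN⟩ := eventually_atTop.1 hev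
  refine ⟨N, fun M hM => ?_⟩
  have hNM := hN M hM
  -- two-sided bound on the sups
  have key₁ : (⨆ w : W, fM M w) ≤ (⨆ w : W, μf w) + 2 * (1 / (n + 1 : ℝ)) := by
    refine ciSup_le fun w => ?_
    obtain ⟨w₀, hw₀T, hP⟩ := hTnet n w w.2
    have h1 := hfMnet n M w w₀ hP
    have h2 := hNM w₀ hw₀T
    have h3 : μf w₀ ≤ ⨆ w : W, μf w :=
      le_ciSup hbddμ (⟨w₀, hTW n hw₀T⟩ : W)
    have := abs_le.1 h1
    have := abs_lt.1 h2
    linarith [(abs_le.1 h1).1, (abs_le.1 h1).2, (abs_lt.1 h2).1, (abs_lt.1 h2).2]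
  have key₂ : (⨆ w : W, μf w) ≤ (⨆ w : W, fM M w) + 2 * (1 / (n + 1 : ℝ)) := by
    refine ciSup_le fun w => ?_
    obtain ⟨w₀, hw₀T, hP⟩ := hTnet n w w.2
    have h1 := hμnet n w w.2 w₀ (hTW n hw₀T) hP
    have h2 := hNM w₀ hw₀T
    have h3 : fM M w₀ ≤ ⨆ w : W, fM M w :=
      le_ciSup (hbddM M) (⟨w₀, hTW n hw₀T⟩ : W)
    linarith [(abs_le.1 h1).1, (abs_le.1 h1).2, (abs_lt.1 h2).1, (abs_lt.1 h2).2]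
  rw [Real.dist_eq]
  have habs : |(⨆ w : W, fM M w) - ⨆ w : W, μf w| ≤ 2 * (1 / (n + 1 : ℝ)) :=
    abs_sub_le_iff.2 ⟨by linarith, by linarith⟩
  linarith
end
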